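/- Let X be a locally compact Hausdorff space, Y a closed subset of X, A a C*-algebra, and I a closed two-sided ideal of A. Then, as subsets of C₀(X,A), { f ∈ C₀(X,A) : f(x) ∈ I for all x ∈ X } + { f ∈ C₀(X,A) : f(y) = 0 for all y ∈ Y } = { f ∈ C₀(X,A) : f(y) ∈ I for all y ∈ Y }. -/

import Mathlib

open scoped ZeroAtInfty Pointwise
open Filter Topology Metric Set

set_option maxHeartbeats 4000000

namespace Stmt3Aux

lemma aux_bound (c t : ℝ) (hc : 0 < c) : |t * (1 - c*t^2/(1+c*t^2))^2| ≤ (2 * Real.sqrt c)⁻¹ := by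
  have hd : (0:ℝ) < 1 + c*t^2 := by positivity
  have h1 : 1 - c*t^2/(1+c*t^2) = (1+c*t^2)⁻¹ := by field_simp; ring
  rw [h1]
  have hs : 0 < Real.sqrt c := Real.sqrt_pos.mpr hc
  have hAM : 2 * Real.sqrt c * |t| ≤ 1 + c*t^2 := by
    nlinarith [sq_nonneg (Real.sqrt c * |t| - 1), Real.sq_sqrt hc.le, sq_abs t, hs]
  have habs : |t * ((1+c*t^2)⁻¹)^2| = |t| * ((1+c*t^2)⁻¹)^2 := by
    rw [abs_mul, abs_of_nonneg (by positivity : (0:ℝ) ≤ ((1+c*t^2)⁻¹)^2)]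
  rw [habs, inv_pow, ← div_eq_mul_inv, div_le_iff₀ (by positivity), inv_mul_eq_div,
    le_div_iff₀ (by positivity)]
  have h2 : (1:ℝ) ≤ 1 + c*t^2 := by nlinarith [sq_nonneg t]
  nlinarith [abs_nonneg t, hAM, h2, sq_nonneg (1 + c*t^2)]

/-- In a non-unital C⋆-algebra, every element is approximated by right multiples of itself. -/
lemma exists_norm_sub_mul_lt {B : Type*} [NonUnitalCStarAlgebra B] (a : B) {ε : ℝ}
    (hε : 0 < ε) : ∃ e : B, ‖a - a * e‖ < ε := by
  obtain ⟨n, hn⟩ := exists_nat_gt (((ε^2)⁻¹)^2)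
  set c : ℝ := ((n : ℝ) + 1) with hc_def
  have hc : 0 < c := by positivity
  set b := star a * a with hb_def
  have hb : IsSelfAdjoint b := .star_mul_self a
  set f : ℝ → ℝ := fun t => c*t^2/(1+c*t^2) with hf_def
  have hfc : Continuous f := by
    apply Continuous.div (by fun_prop) (by fun_prop) (fun t => by positivity)
  have hf0 : f 0 = 0 := by simp [hf_def]
  set e := cfcₙ f b with he_def
  have he_sa : IsSelfAdjoint e := cfcₙ_predicate f b
  have h_be : cfcₙ (fun t : ℝ => t * f t) b = b * e := by
    have h := cfcₙ_mul (fun t : ℝ => t) f b (continuous_id.continuousOn) rfl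
      hfc.continuousOn hf0
    rw [h, cfcₙ_id' ℝ b]
  have h_eb : cfcₙ (fun t : ℝ => f t * t) b = e * b := by
    have h := cfcₙ_mul f (fun t : ℝ => t) b hfc.continuousOn hf0
      (continuous_id.continuousOn) rfl
    rw [h, cfcₙ_id' ℝ b]
  have h_ebe : cfcₙ (fun t : ℝ => f t * (t * f t)) b = e * (b * e) := by
    have h := cfcₙ_mul f (fun t : ℝ => t * f t) b hfc.continuousOn hf0
      (by fun_prop) (by simp [hf0])
    rw [h, h_be]
  have key : star (a - a * e) * (a - a * e) = cfcₙ (fun t : ℝ => t * (1 - f t)^2) b := by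
    have hq : (fun t : ℝ => t * (1 - f t)^2)
        = fun t : ℝ => (t - t * f t) - (f t * t - f t * (t * f t)) := by
      funext t; ring
    have hsub1 := cfcₙ_sub (fun t : ℝ => t) (fun t : ℝ => t * f t) b
      (continuous_id.continuousOn) rfl (by fun_prop) (by simp [hf0])
    have hsub2 := cfcₙ_sub (fun t : ℝ => f t * t) (fun t : ℝ => f t * (t * f t)) b
      (by fun_prop) (by simp [hf0]) (by fun_prop) (by simp [hf0])
    have hsub3 := cfcₙ_sub (fun t : ℝ => t - t * f t)
      (fun t : ℝ => f t * t - f t * (t * f t)) b (by fun_prop) (by simp [hf0])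
      (by fun_prop) (by simp [hf0])
    rw [hq, hsub3, hsub1, hsub2, h_be, h_eb, h_ebe, cfcₙ_id' ℝ b]
    rw [star_sub, star_mul, he_sa.star_eq]
    simp only [hb_def]
    noncomm_ring
  refine ⟨e, ?_⟩
  have hbound : ‖star (a - a * e) * (a - a * e)‖ ≤ (2 * Real.sqrt c)⁻¹ := by
    rw [key]
    refine norm_cfcₙ_le fun t _ => ?_
    rw [Real.norm_eq_abs]
    exact aux_bound c t hc
  rw [CStarRing.norm_star_mul_self] at hbound
  have hsq : (2 * Real.sqrt c)⁻¹ < ε * ε := by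
    have h1 : (ε^2)⁻¹ < Real.sqrt c := by
      rw [show (ε^2)⁻¹ = Real.sqrt (((ε^2)⁻¹)^2) from (Real.sqrt_sq (by positivity)).symm]
      apply Real.sqrt_lt_sqrt (by positivity)
      calc ((ε^2)⁻¹)^2 < (n : ℝ) := hn
        _ ≤ c := by rw [hc_def]; linarith
    have h2 : (0:ℝ) < (ε^2)⁻¹ := by positivity
    have h3 : (2 * Real.sqrt c)⁻¹ < ((ε^2)⁻¹)⁻¹ := by
      apply inv_strictAnti₀ h2
      linarith
    rw [inv_inv] at h3
    calc (2 * Real.sqrt c)⁻¹ < ε^2 := h3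
      _ = ε * ε := sq ε
  nlinarith [norm_nonneg (a - a * e)]

/-- Closed two-sided ideals in a non-unital C⋆-algebra are closed under real scalar
multiplication. -/
lemma smul_mem_of_isClosed {B : Type*} [NonUnitalCStarAlgebra B] (I : TwoSidedIdeal B)
    (hI : IsClosed (I : Set B)) (r : ℝ) {a : B} (ha : a ∈ I) : r • a ∈ I := by
  rcases eq_or_ne r 0 with rfl | hr
  · simpa using I.zero_mem
  have : r • a ∈ closure (I : Set B) := by
    rw [Metric.mem_closure_iff]
    intro ε hε
    have hpos : 0 < ε / |r| := by positivity
    obtain ⟨e, he⟩ := exists_norm_sub_mul_lt a hpos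
    refine ⟨a * (r • e), I.mul_mem_right _ _ ha, ?_⟩
    rw [dist_eq_norm, mul_smul_comm, ← smul_sub, norm_smul, Real.norm_eq_abs]
    calc |r| * ‖a - a * e‖ < |r| * (ε / |r|) := by
          apply mul_lt_mul_of_pos_left he (abs_pos.mpr hr)
      _ = ε := by field_simp
  rwa [hI.closure_eq] at this

end Stmt3Aux

/-- For a closed subset `Y ⊆ X` and a closed two-sided ideal `I` of `A`,
`{f : f(X) ⊆ I} + {f : f(Y) = {0}} = {f : f(Y) ⊆ I}` as subsets of `C₀(X, A)`.
(These correspond to `C₀(X) ⊗^min I + J(Y) ⊗^min A = {f : f(Y) ⊆ I}`.) -/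
theorem stmt3 {X A : Type*} [TopologicalSpace X] [LocallyCompactSpace X] [T2Space X]
    [NonUnitalNormedRing A] [StarRing A] [CStarRing A] [NormedSpace ℂ A]
    [IsScalarTower ℂ A A] [SMulCommClass ℂ A A] [StarModule ℂ A] [CompleteSpace A]
    (Y : Set X) (hY : IsClosed Y) (I : TwoSidedIdeal A) (hI : IsClosed (I : Set A)) :
    {f : C₀(X, A) | ∀ x, f x ∈ I} + {f : C₀(X, A) | ∀ y ∈ Y, f y = 0}
      = {f : C₀(X, A) | ∀ y ∈ Y, f y ∈ I} := by
  classical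
  letI : NonUnitalCStarAlgebra A :=
    { ‹NonUnitalNormedRing A›, ‹StarRing A›, ‹CStarRing A›, ‹NormedSpace ℂ A›,
      ‹IsScalarTower ℂ A A›, ‹SMulCommClass ℂ A A›, ‹StarModule ℂ A›, ‹CompleteSpace A› with }
  have hsmulI : ∀ (r : ℝ) {a : A}, a ∈ I → r • a ∈ I := fun r a ha =>
    Stmt3Aux.smul_mem_of_isClosed I hI r ha
  -- norm facts for C₀
  have normge : ∀ (u : C₀(X, A)) (x : X), ‖u x‖ ≤ ‖u‖ := fun u x =>
    calc ‖u x‖ = ‖u.toBCF x‖ := rfl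
      _ ≤ ‖u.toBCF‖ := BoundedContinuousFunction.norm_coe_le_norm _ x
      _ = ‖u‖ := ZeroAtInftyContinuousMap.norm_toBCF_eq_norm
  have normle : ∀ (u : C₀(X, A)) (C : ℝ), 0 ≤ C → (∀ x, ‖u x‖ ≤ C) → ‖u‖ ≤ C := by
    intro u C hC h
    rw [← ZeroAtInftyContinuousMap.norm_toBCF_eq_norm]
    exact BoundedContinuousFunction.norm_le hC |>.mpr h
  -- compactness of superlevel sets
  have hcompactlev : ∀ (u : C₀(X, A)) {δ : ℝ}, 0 < δ → IsCompact {x | δ ≤ ‖u x‖} := by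
    intro u δ hδ
    have h := ZeroAtInftyContinuousMapClass.zero_at_infty u
    rw [Metric.tendsto_nhds] at h
    have h2 : {x : X | dist (u x) 0 < δ} ∈ cocompact X := h δ hδ
    rw [Filter.mem_cocompact] at h2
    obtain ⟨K, hK, hKsub⟩ := h2
    apply hK.of_isClosed_subset
    · exact IsClosed.preimage (by fun_prop : Continuous fun x => ‖u x‖) isClosed_Ici
    · intro x hx
      by_contra hxK
      have := hKsub hxK
      simp only [Set.mem_setOf_eq, dist_zero_right] at this
      exact absurd hx (by simp only [Set.mem_setOf_eq]; push_neg; exact this)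
  -- evaluation is continuous
  have heval : ∀ x : X, Continuous fun u : C₀(X, A) => u x := by
    intro x
    have : LipschitzWith 1 fun u : C₀(X, A) => u x := LipschitzWith.mk_one fun u v => by
      rw [← ZeroAtInftyContinuousMap.dist_toBCF_eq_dist]
      exact BoundedContinuousFunction.dist_coe_le_dist (f := u.toBCF) (g := v.toBCF) x
    exact this.continuous
  ext f
  simp only [Set.mem_setOf_eq]
  constructor
  · -- easy inclusion
    intro hmem
    rw [Set.mem_add] at hmem
    obtain ⟨g, hg, h, hh, rfl⟩ := hmem
    intro y hy
    have : (g + h) y = g y + h y := rfl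
    rw [this, hh y hy, add_zero]
    exact hg y
  · -- hard inclusion
    intro hf
    -- the key approximation step
    have step : ∀ (u : C₀(X, A)), (∀ y ∈ Y, u y ∈ I) → ∀ δ : ℝ, 0 < δ →
        ∃ g h : C₀(X, A), (∀ x, g x ∈ I) ∧ (∀ y ∈ Y, h y = 0) ∧
          ‖u - (g + h)‖ ≤ 4 * δ ∧ ‖h‖ ≤ ‖u‖ := by
      intro u hu δ hδ
      -- distance-to-ideal function
      set d : X → ℝ := fun x => infDist (u x) (I : Set A) with hd_def
      have hdc : Continuous d := (Metric.continuous_infDist_pt _).comp (map_continuous u)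
      have hdY : ∀ y ∈ Y, d y = 0 := fun y hy => infDist_zero_of_mem (hu y hy)
      have hdle : ∀ x, d x ≤ ‖u x‖ := fun x => by
        simpa using infDist_le_dist_of_mem (x := u x) I.zero_mem
      set C : Set X := {x | δ ≤ d x} with hC_def
      have hCclosed : IsClosed C := isClosed_le continuous_const hdc
      have hCcomp : IsCompact C :=
        (hcompactlev u hδ).of_isClosed_subset hCclosed fun x hx => le_trans hx (hdle x)
      have hdisj : Disjoint C Y := by
        rw [Set.disjoint_left]
        intro x hx hxY
        have h0 := hdY x hxY
        have h1 : δ ≤ d x := hx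
        rw [h0] at h1
        linarith
      obtain ⟨ψ, hψC, hψY, hψ01⟩ := exists_continuous_zero_one_of_isCompact hCcomp hY hdisj
      -- h := (1 - ψ) • u
      have hcont_h : Continuous fun x => (1 - ψ x) • u x :=
        (continuous_const.sub ψ.continuous).smul (map_continuous u)
      have hbnd : ∀ x, ‖(1 - ψ x) • u x‖ ≤ ‖u x‖ := by
        intro x
        rw [norm_smul, Real.norm_eq_abs]
        have h1 := (hψ01 x).1
        have h2 := (hψ01 x).2
        have : |1 - ψ x| ≤ 1 := by rw [abs_le]; constructor <;> linarith
        calc |1 - ψ x| * ‖u x‖ ≤ 1 * ‖u x‖ :=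
              mul_le_mul_of_nonneg_right this (norm_nonneg _)
          _ = ‖u x‖ := one_mul _
      have hzero_h : Tendsto (fun x => (1 - ψ x) • u x) (cocompact X) (𝓝 0) := by
        apply squeeze_zero_norm hbnd
        have := ZeroAtInftyContinuousMapClass.zero_at_infty (u : C₀(X, A))
        simpa [tendsto_zero_iff_norm_tendsto_zero] using this
      set h : C₀(X, A) := ⟨⟨fun x => (1 - ψ x) • u x, hcont_h⟩, hzero_h⟩ with hh_def
      have happ : ∀ x, h x = (1 - ψ x) • u x := fun x => rfl
      have hhY : ∀ y ∈ Y, h y = 0 := by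
        intro y hy
        rw [happ, hψY hy]
        norm_num
      have hnorm_h : ‖h‖ ≤ ‖u‖ := normle _ _ (norm_nonneg u) fun x =>
        (hbnd x).trans (normge u x)
      -- F := u - h  =  ψ • u
      set F : C₀(X, A) := u - h with hF_def
      have hFapp : ∀ x, F x = ψ x • u x := by
        intro x
        show u x - (1 - ψ x) • u x = ψ x • u x
        rw [sub_smul, one_smul]
        abel
      have hFdist : ∀ x, infDist (F x) (I : Set A) ≤ δ := by
        intro x
        by_cases hx : x ∈ C
        · have : ψ x = 0 := hψC hx
          rw [hFapp, this, zero_smul]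
          rw [infDist_zero_of_mem I.zero_mem]
          exact hδ.le
        · have hdx : d x < δ := lt_of_not_ge hx
          have hne : (I : Set A).Nonempty := ⟨0, I.zero_mem⟩
          rw [hd_def] at hdx
          rw [Metric.infDist_lt_iff hne] at hdx
          obtain ⟨b, hbI, hbd⟩ := hdx
          have hmem : ψ x • b ∈ (I : Set A) := hsmulI (ψ x) hbI
          calc infDist (F x) (I : Set A) ≤ dist (F x) (ψ x • b) :=
                infDist_le_dist_of_mem hmem
            _ = |ψ x| * dist (u x) b := by rw [hFapp, dist_smul₀, Real.norm_eq_abs]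
            _ ≤ 1 * δ := by
                apply mul_le_mul
                · rw [abs_le]; exact ⟨by linarith [(hψ01 x).1], (hψ01 x).2⟩
                · exact hbd.le
                · exact dist_nonneg
                · norm_num
            _ = δ := one_mul δ
      -- choose near points in the ideal
      have hchoice : ∀ x : X, ∃ b, b ∈ I ∧ dist (F x) b < 2 * δ := by
        intro x
        have := hFdist x
        have hlt : infDist (F x) (I : Set A) < 2 * δ := by linarith
        rw [Metric.infDist_lt_iff ⟨0, I.zero_mem⟩] at hlt
        obtain ⟨b, hbI, hbd⟩ := hlt
        exact ⟨b, hbI, hbd⟩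
      choose aa haaI haad using hchoice
      -- compact set and cover
      set K : Set X := {x | δ ≤ ‖F x‖} with hK_def
      have hKcomp : IsCompact K := hcompactlev F hδ
      set U : X → Set X := fun x0 => {x | dist (F x) (F x0) < δ} with hU_def
      have hUopen : ∀ x0, IsOpen (U x0) := fun x0 =>
        isOpen_lt (by fun_prop : Continuous fun x => dist (F x) (F x0)) continuous_const
      have hUmem : ∀ x0, x0 ∈ U x0 := fun x0 => by
        simp only [hU_def, Set.mem_setOf_eq, dist_self]; exact hδ
      obtain ⟨t, ht⟩ := hKcomp.elim_finite_subcover U hUopen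
        (fun x _ => mem_iUnion.mpr ⟨x, hUmem x⟩)
      have hcover : K ⊆ ⋃ i : {z : X // z ∈ t}, U i := by
        intro x hx
        have := ht hx
        rw [Set.mem_iUnion₂] at this
        obtain ⟨z, hz, hxz⟩ := this
        exact Set.mem_iUnion.mpr ⟨⟨z, hz⟩, hxz⟩
      obtain ⟨φ, hφsub, hφcomp⟩ :=
        PartitionOfUnity.exists_isSubordinate_of_locallyFinite_t2space hKcomp
          (fun i : {z : X // z ∈ t} => U i) (fun i => hUopen _)
          (locallyFinite_of_finite _) hcover
      -- g := ∑ φᵢ • aᵢ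
      set g0 : X → A := fun x => ∑ i : {z : X // z ∈ t}, φ i x • aa i with hg0_def
      have hg0c : Continuous g0 :=
        continuous_finset_sum _ fun i _ => ((φ i).continuous.smul continuous_const)
      set T : Set X := ⋃ i : {z : X // z ∈ t}, tsupport (φ i) with hT_def
      have hTcomp : IsCompact T := isCompact_iUnion fun i => hφcomp i
      have hg0supp : ∀ x, x ∉ T → g0 x = 0 := by
        intro x hx
        apply Finset.sum_eq_zero
        intro i _
        have hxi : x ∉ tsupport (φ i) := fun hmem => hx (Set.mem_iUnion.mpr ⟨i, hmem⟩)
        have : φ i x = 0 := image_eq_zero_of_notMem_tsupport hxi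
        rw [this, zero_smul]
      have hg0z : Tendsto g0 (cocompact X) (𝓝 0) := by
        have hev : ∀ᶠ x in cocompact X, g0 x = 0 := by
          rw [Filter.eventually_iff, Filter.mem_cocompact]
          exact ⟨T, hTcomp, fun x hx => hg0supp x hx⟩
        exact Tendsto.congr' (by filter_upwards [hev] with x hx using hx.symm)
          tendsto_const_nhds
      set g : C₀(X, A) := ⟨⟨g0, hg0c⟩, hg0z⟩ with hg_def
      have hgI : ∀ x, g x ∈ I := by
        intro x
        exact sum_mem fun i _ => hsmulI (φ i x) (haaI i)
      -- the estimate
      have hFg : ∀ x, ‖F x - g0 x‖ ≤ 4 * δ := by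
        intro x
        set s : ℝ := ∑ i : {z : X // z ∈ t}, φ i x with hs_def
        have hs_le : s ≤ 1 := by
          have := φ.sum_le_one' x
          rwa [finsum_eq_sum_of_fintype] at this
        have hs_nonneg : 0 ≤ s := Finset.sum_nonneg fun i _ => φ.nonneg i x
        have hsum_smul : ∑ i : {z : X // z ∈ t}, φ i x • F x = s • F x := by
          rw [hs_def, ← Finset.sum_smul]
        have hdecomp : F x - g0 x
            = (1 - s) • F x + ∑ i : {z : X // z ∈ t}, φ i x • (F x - aa i) := by
          have h1 : ∑ i : {z : X // z ∈ t}, φ i x • (F x - aa i)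
              = s • F x - g0 x := by
            simp only [smul_sub]
            rw [Finset.sum_sub_distrib, hsum_smul]
          rw [h1, sub_smul, one_smul]
          abel
        have hterm : ∀ i : {z : X // z ∈ t}, ‖φ i x • (F x - aa i)‖ ≤ φ i x * (3 * δ) := by
          intro i
          rcases eq_or_ne (φ i x) 0 with h0 | h0
          · rw [h0, zero_smul, norm_zero, zero_mul]
          · have hxU : x ∈ U i := hφsub i (subset_tsupport _ (by simpa using h0))
            have hdistF : dist (F x) (F i) < δ := hxU
            have hdista : dist (F (i : X)) (aa i) < 2 * δ := haad i
            have : ‖F x - aa i‖ ≤ 3 * δ := by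
              rw [← dist_eq_norm]
              calc dist (F x) (aa i) ≤ dist (F x) (F (i : X)) + dist (F (i : X)) (aa i) :=
                    dist_triangle _ _ _
                _ ≤ 3 * δ := by linarith
            rw [norm_smul, Real.norm_eq_abs, abs_of_nonneg (φ.nonneg i x)]
            exact mul_le_mul_of_nonneg_left this (φ.nonneg i x)
        have hsum_bound : ‖∑ i : {z : X // z ∈ t}, φ i x • (F x - aa i)‖ ≤ 3 * δ := by
          calc ‖∑ i : {z : X // z ∈ t}, φ i x • (F x - aa i)‖
              ≤ ∑ i : {z : X // z ∈ t}, ‖φ i x • (F x - aa i)‖ := norm_sum_le _ _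
            _ ≤ ∑ i : {z : X // z ∈ t}, φ i x * (3 * δ) :=
                Finset.sum_le_sum fun i _ => hterm i
            _ = s * (3 * δ) := by rw [hs_def, Finset.sum_mul]
            _ ≤ 1 * (3 * δ) := by
                apply mul_le_mul_of_nonneg_right hs_le (by linarith)
            _ = 3 * δ := one_mul _
        have hfirst : ‖(1 - s) • F x‖ ≤ δ := by
          by_cases hx : x ∈ K
          · have : s = 1 := by
              have := φ.sum_eq_one' x hx
              rwa [finsum_eq_sum_of_fintype] at this
            rw [this]; simpa using hδ.le
          · have hFx : ‖F x‖ < δ := by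
              by_contra hcon
              exact hx (le_of_not_gt hcon)
            rw [norm_smul, Real.norm_eq_abs, abs_of_nonneg (by linarith)]
            calc (1 - s) * ‖F x‖ ≤ 1 * ‖F x‖ :=
                  mul_le_mul_of_nonneg_right (by linarith) (norm_nonneg _)
              _ ≤ δ := by rw [one_mul]; exact hFx.le
        calc ‖F x - g0 x‖
            = ‖(1 - s) • F x + ∑ i : {z : X // z ∈ t}, φ i x • (F x - aa i)‖ := by
              rw [hdecomp]
          _ ≤ ‖(1 - s) • F x‖ + ‖∑ i : {z : X // z ∈ t}, φ i x • (F x - aa i)‖ :=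
              norm_add_le _ _
          _ ≤ δ + 3 * δ := add_le_add hfirst hsum_bound
          _ = 4 * δ := by ring
      refine ⟨g, h, hgI, hhY, ?_, hnorm_h⟩
      have : u - (g + h) = F - g := by rw [hF_def]; abel
      rw [this]
      apply normle _ _ (by linarith)
      intro x
      have : (F - g) x = F x - g0 x := rfl
      rw [this]
      exact hFg x
    -- the iteration
    have step' : ∀ u : C₀(X, A), (∀ y ∈ Y, u y ∈ I) → ∃ gh : C₀(X, A) × C₀(X, A),
        (∀ x, gh.1 x ∈ I) ∧ (∀ y ∈ Y, gh.2 y = 0) ∧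
          ‖u - (gh.1 + gh.2)‖ ≤ ‖u‖ / 2 ∧ ‖gh.2‖ ≤ ‖u‖ := by
      intro u hu
      rcases eq_or_ne u 0 with rfl | hne
      · exact ⟨(0, 0), by simp [I.zero_mem], by simp, by simp, by simp⟩
      · have hpos : 0 < ‖u‖ / 8 := by
          have := norm_pos_iff.mpr hne
          positivity
        obtain ⟨g, h, h1, h2, h3, h4⟩ := step u hu (‖u‖ / 8) hpos
        exact ⟨(g, h), h1, h2, by dsimp only; linarith, h4⟩
    set pick : C₀(X, A) → C₀(X, A) × C₀(X, A) := fun u =>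
      if hu : (∀ y ∈ Y, u y ∈ I) then Classical.choose (step' u hu) else (0, 0)
      with hpick_def
    have pick_spec : ∀ u : C₀(X, A), (∀ y ∈ Y, u y ∈ I) →
        (∀ x, (pick u).1 x ∈ I) ∧ (∀ y ∈ Y, (pick u).2 y = 0) ∧
          ‖u - ((pick u).1 + (pick u).2)‖ ≤ ‖u‖ / 2 ∧ ‖(pick u).2‖ ≤ ‖u‖ := by
      intro u hu
      rw [hpick_def]
      simp only [dif_pos hu]
      exact Classical.choose_spec (step' u hu)
    set nxt : C₀(X, A) → C₀(X, A) := fun u => u - ((pick u).1 + (pick u).2) with hnxt_def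
    set useq : ℕ → C₀(X, A) := fun n => nxt^[n] f with huseq_def
    have huseq_succ : ∀ n, useq (n + 1) = nxt (useq n) := fun n =>
      Function.iterate_succ_apply' nxt n f
    have huseq_zero : useq 0 = f := rfl
    have hmem : ∀ n, ∀ y ∈ Y, useq n y ∈ I := by
      intro n
      induction n with
      | zero => exact hf
      | succ n ih =>
        intro y hy
        rw [huseq_succ n]
        have hspec := pick_spec (useq n) ih
        show (useq n - ((pick (useq n)).1 + (pick (useq n)).2)) y ∈ I
        have heq : (useq n - ((pick (useq n)).1 + (pick (useq n)).2)) y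
            = useq n y - ((pick (useq n)).1 y + (pick (useq n)).2 y) := rfl
        rw [heq, hspec.2.1 y hy, add_zero]
        exact I.sub_mem (ih y hy) (hspec.1 y)
    have hnorm : ∀ n, ‖useq n‖ ≤ (1/2 : ℝ)^n * ‖f‖ := by
      intro n
      induction n with
      | zero => rw [huseq_zero]; simp
      | succ n ih =>
        rw [huseq_succ n]
        have hspec := pick_spec (useq n) (hmem n)
        calc ‖nxt (useq n)‖ = ‖useq n - ((pick (useq n)).1 + (pick (useq n)).2)‖ := rfl
          _ ≤ ‖useq n‖ / 2 := hspec.2.2.1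
          _ ≤ ((1/2 : ℝ)^n * ‖f‖) / 2 := by linarith
          _ = (1/2 : ℝ)^(n+1) * ‖f‖ := by ring
    set gseq : ℕ → C₀(X, A) := fun n => (pick (useq n)).1 with hgseq_def
    set hseq : ℕ → C₀(X, A) := fun n => (pick (useq n)).2 with hhseq_def
    have hhbound : ∀ n, ‖hseq n‖ ≤ (1/2 : ℝ)^n * ‖f‖ := fun n =>
      le_trans (pick_spec (useq n) (hmem n)).2.2.2 (hnorm n)
    have hgbound : ∀ n, ‖gseq n‖ ≤ (1/2 : ℝ)^n * ‖f‖ * (5/2) := by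
      intro n
      have hspec := pick_spec (useq n) (hmem n)
      have heq : gseq n = (useq n - hseq n) - (useq n - (gseq n + hseq n)) := by abel
      calc ‖gseq n‖ = ‖(useq n - hseq n) - (useq n - (gseq n + hseq n))‖ := by rw [← heq]
        _ ≤ ‖useq n - hseq n‖ + ‖useq n - (gseq n + hseq n)‖ := norm_sub_le _ _
        _ ≤ (‖useq n‖ + ‖hseq n‖) + ‖useq n‖ / 2 := by
            have h1 : ‖useq n - hseq n‖ ≤ ‖useq n‖ + ‖hseq n‖ := norm_sub_le _ _
            have h2 := hspec.2.2.1
            exact add_le_add h1 h2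
        _ ≤ (1/2 : ℝ)^n * ‖f‖ * (5/2) := by
            have h1 := hnorm n
            have h2 := hhbound n
            linarith
    have hsummable_aux : Summable fun n : ℕ => (1/2 : ℝ)^n := by
      apply summable_geometric_of_lt_one <;> norm_num
    have hsumg : Summable gseq := by
      apply Summable.of_norm_bounded
        ((hsummable_aux.mul_right ‖f‖).mul_right (5/2)) hgbound
    have hsumh : Summable hseq := by
      apply Summable.of_norm_bounded
        (hsummable_aux.mul_right ‖f‖) hhbound
    set G := ∑' n, gseq n with hG_def
    set H := ∑' n, hseq n with hH_def
    have hGsum : HasSum gseq G := hsumg.hasSum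
    have hHsum : HasSum hseq H := hsumh.hasSum
    have htel : ∀ n, ∑ k ∈ Finset.range n, (gseq k + hseq k) = f - useq n := by
      intro n
      induction n with
      | zero => simp [huseq_zero]
      | succ n ih =>
        rw [Finset.sum_range_succ, ih, huseq_succ n]
        show f - useq n + (gseq n + hseq n)
          = f - (useq n - ((pick (useq n)).1 + (pick (useq n)).2))
        rw [hgseq_def, hhseq_def]
        abel
    have hulim : Tendsto useq atTop (𝓝 0) := by
      apply squeeze_zero_norm hnorm
      have h1 : Tendsto (fun n : ℕ => (1/2 : ℝ)^n) atTop (𝓝 0) := by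
        apply tendsto_pow_atTop_nhds_zero_of_lt_one <;> norm_num
      simpa using h1.mul_const ‖f‖
    have hlim1 : Tendsto (fun n => ∑ k ∈ Finset.range n, (gseq k + hseq k)) atTop
        (𝓝 (f - 0)) := by
      simp only [htel]
      exact tendsto_const_nhds.sub hulim
    have hlim2 : Tendsto (fun n => ∑ k ∈ Finset.range n, (gseq k + hseq k)) atTop
        (𝓝 (G + H)) := (hGsum.add hHsum).tendsto_sum_nat
    have hfGH : f = G + H := by
      have := tendsto_nhds_unique hlim1 hlim2
      rw [sub_zero] at this
      exact this
    -- memberships of the limits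
    have coe_sum : ∀ (n : ℕ) (v : ℕ → C₀(X, A)) (x : X),
        (∑ k ∈ Finset.range n, v k) x = ∑ k ∈ Finset.range n, v k x := by
      intro n v x
      induction n with
      | zero => rfl
      | succ n ih => rw [Finset.sum_range_succ, Finset.sum_range_succ, ← ih]; rfl
    have hGmem : ∀ x, G x ∈ I := by
      intro x
      have htendsto : Tendsto (fun n => (∑ k ∈ Finset.range n, gseq k) x) atTop (𝓝 (G x)) :=
        ((heval x).tendsto G).comp hGsum.tendsto_sum_nat
      apply hI.mem_of_tendsto htendsto
      filter_upwards with n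
      rw [coe_sum n gseq x]
      exact sum_mem fun k _ => (pick_spec (useq k) (hmem k)).1 x
    have hHmem : ∀ y ∈ Y, H y = 0 := by
      intro y hy
      have htendsto : Tendsto (fun n => (∑ k ∈ Finset.range n, hseq k) y) atTop (𝓝 (H y)) :=
        ((heval y).tendsto H).comp hHsum.tendsto_sum_nat
      have hzero : ∀ n, (∑ k ∈ Finset.range n, hseq k) y = 0 := by
        intro n
        rw [coe_sum n hseq y]
        apply Finset.sum_eq_zero
        intro k _
        exact (pick_spec (useq k) (hmem k)).2.1 y hy
      have : Tendsto (fun n => (∑ k ∈ Finset.range n, hseq k) y) atTop (𝓝 0) := by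
        simp only [hzero]
        exact tendsto_const_nhds
      exact tendsto_nhds_unique htendsto this
    rw [hfGH]
    exact Set.add_mem_add hGmem hHmem
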